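/- arXiv:1705.02188 — 2 statements merged into one kernel-verified Lean document; each statement's English description precedes it below -/
import Mathlib

section
/- Let A and B be n×n complex positive definite matrices with A ≤ B in the Loewner order, and let p ∈ (0,1]. Then the full chain 0 ≤ A − A B^{−1} A ≤ K_p(A,B) ≤ T_p(A|B) ≤ (1/2)·(A #_p B − A ♮_{p−1} B + B − A) ≤ B − A holds in the Loewner order. -/
open Matrix ComplexOrder

/-- Real power of a (Hermitian) complex matrix via the continuous functional calculus,
corresponding to `Matrix.PosDef.rpow` on positive definite matrices. -/
noncomputable def mrpow {n : Type*} [Fintype n] [DecidableEq n]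
    (A : Matrix n n ℂ) (r : ℝ) : Matrix n n ℂ :=
  cfc (fun t : ℝ => t ^ r) A

/-- The Loewner order: `loe X Y` means `Y - X` is positive semidefinite. -/
def loe {n : Type*} [Fintype n] (X Y : Matrix n n ℂ) : Prop :=
  (Y - X).PosSemidef

/-- `A ♮ᵣ B = A^{1/2} (A^{-1/2} B A^{-1/2})^r A^{1/2}`; for `r ∈ [0,1]` this is the
weighted geometric mean `A #ᵣ B`. -/
noncomputable def natu {n : Type*} [Fintype n] [DecidableEq n]
    (A B : Matrix n n ℂ) (r : ℝ) : Matrix n n ℂ :=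
  mrpow A (1 / 2) * mrpow (mrpow A (-(1 / 2)) * B * mrpow A (-(1 / 2))) r * mrpow A (1 / 2)

/-- The Tsallis relative operator entropy `T_p(A|B) = (A #_p B - A) / p`. -/
noncomputable def TsallisEntropy {n : Type*} [Fintype n] [DecidableEq n]
    (A B : Matrix n n ℂ) (p : ℝ) : Matrix n n ℂ :=
  (1 / p : ℝ) • (natu A B p - A)

/-- `K_p(A,B) = A^{1/2} ((A^{-1/2} B A^{-1/2} + I)/2)^{p-1} (A^{-1/2} B A^{-1/2} - I) A^{1/2}`. -/
noncomputable def Kp {n : Type*} [Fintype n] [DecidableEq n]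
    (A B : Matrix n n ℂ) (p : ℝ) : Matrix n n ℂ :=
  mrpow A (1 / 2) *
    mrpow ((1 / 2 : ℝ) • (mrpow A (-(1 / 2)) * B * mrpow A (-(1 / 2)) + 1)) (p - 1) *
    (mrpow A (-(1 / 2)) * B * mrpow A (-(1 / 2)) - 1) * mrpow A (1 / 2)


section AuxStmt8
open Real Set

variable {n : Type*} [Fintype n] [DecidableEq n]

lemma finContOn {s : Set ℝ} (hs : s.Finite) (f : ℝ → ℝ) : ContinuousOn f s := by
  rw [continuousOn_iff_continuous_restrict]
  haveI := hs.to_subtype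
  exact continuous_of_discreteTopology

lemma matContOn (C : Matrix n n ℂ) (f : ℝ → ℝ) : ContinuousOn f (spectrum ℝ C) :=
  finContOn C.finite_real_spectrum f

lemma cfc_posSemidef {C : Matrix n n ℂ} (hC : C.IsHermitian) {f : ℝ → ℝ}
    (hf : ∀ x ∈ spectrum ℝ C, 0 ≤ f x) : (cfc f C).PosSemidef := by
  rw [hC.cfc_eq, Matrix.IsHermitian.cfc]
  have hd : (Matrix.diagonal (RCLike.ofReal ∘ f ∘ hC.eigenvalues) : Matrix n n ℂ).PosSemidef :=
    Matrix.PosSemidef.diagonal (fun i => by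
      have := hf _ (hC.spectrum_real_eq_range_eigenvalues ▸ Set.mem_range_self i)
      simp only [Function.comp_apply, Pi.zero_apply, RCLike.ofReal_nonneg]
      exact_mod_cast this)
  simpa [Matrix.star_eq_conjTranspose] using
    hd.mul_mul_conjTranspose_same (hC.eigenvectorUnitary : Matrix n n ℂ)

lemma loe_cfc {C : Matrix n n ℂ} (hC : C.IsHermitian) {f g : ℝ → ℝ}
    (h : ∀ x ∈ spectrum ℝ C, f x ≤ g x) : loe (cfc f C) (cfc g C) := by
  have hsub : cfc (fun x => g x - f x) C = cfc g C - cfc f C :=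
    cfc_sub g f C (matContOn C g) (matContOn C f)
  unfold loe
  rw [← hsub]
  exact cfc_posSemidef hC (fun x hx => sub_nonneg.mpr (h x hx))

omit [DecidableEq n] in
lemma loe_conj {S : Matrix n n ℂ} (hS : S.IsHermitian) {X Y : Matrix n n ℂ}
    (h : loe X Y) : loe (S * X * S) (S * Y * S) := by
  unfold loe at *
  have h2 := h.mul_mul_conjTranspose_same S
  rw [hS.eq] at h2
  simpa [Matrix.mul_sub, Matrix.sub_mul] using h2

open Pointwise in
omit [Fintype n] [DecidableEq n] in
lemma spec_sub_one {R A : Type*} [CommRing R] [Ring A] [Algebra R A] {C : A} {x : R}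
    (hx : x ∈ spectrum R C) : x - 1 ∈ spectrum R (C - 1) := by
  have h3 := spectrum.sub_singleton_eq (R := R) C 1
  have h4 : x - 1 ∈ spectrum R C - {(1:R)} := Set.sub_mem_sub hx rfl
  rw [h3] at h4
  simpa using h4

lemma cfc_mul_cfc_eq {M : Matrix n n ℂ} (f g h : ℝ → ℝ)
    (hfg : ∀ x ∈ spectrum ℝ M, f x * g x = h x) : cfc f M * cfc g M = cfc h M := by
  rw [← cfc_mul f g M (matContOn M f) (matContOn M g)]
  exact cfc_congr hfg

lemma mrpow_mul_mrpow {M : Matrix n n ℂ} (hM : ∀ x ∈ spectrum ℝ M, 0 < x) (r s : ℝ) :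
    mrpow M r * mrpow M s = mrpow M (r + s) :=
  cfc_mul_cfc_eq _ _ _ (fun x hx => (Real.rpow_add (hM x hx) r s).symm)

lemma mrpow_zero' {M : Matrix n n ℂ} (hM : IsSelfAdjoint M) : mrpow M 0 = 1 := by
  unfold mrpow
  rw [cfc_congr (g := fun _ : ℝ => (1:ℝ)) (fun x _ => Real.rpow_zero x), cfc_const_one ℝ M hM]

lemma mrpow_one' {M : Matrix n n ℂ} (hM : IsSelfAdjoint M) : mrpow M 1 = M := by
  unfold mrpow
  rw [cfc_congr (g := fun x : ℝ => x) (fun x _ => Real.rpow_one x), cfc_id' ℝ M hM]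

lemma derivL3 {p t : ℝ} (hp1 : p ≤ 1) (ht : 1 ≤ t) :
    1/2 * (p-1) * ((t+1)/2) ^ (p-1-1) * (t-1) + ((t+1)/2) ^ (p-1) * 1 ≤ t ^ (p-1) := by
  set q : ℝ := 1 - p with hq
  have hq0 : 0 ≤ q := by linarith
  have ht0 : (0:ℝ) < t := by linarith
  set m : ℝ := (t+1)/2 with hm
  have hm0 : (0:ℝ) < m := by rw [hm]; linarith
  set u : ℝ := (t+1)/(2*t) with hu
  have hu0 : (0:ℝ) < u := by rw [hu]; positivity
  have hP : (0:ℝ) < m ^ (p-1) := Real.rpow_pos_of_pos hm0 _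
  have htp : t ^ (p-1) = m ^ (p-1) * u ^ q := by
    have h1 : u = m / t := by rw [hu, hm, div_div]
    have h2 : m ^ (p-1) * u ^ q = m ^ (p-1) * m ^ q / t ^ q := by
      rw [h1, Real.div_rpow hm0.le ht0.le]; ring
    have h3 : m ^ (p-1) * m ^ q = 1 := by
      rw [← Real.rpow_add hm0, show p - 1 + q = 0 by rw [hq]; ring, Real.rpow_zero]
    have h4 : t ^ (p-1) = 1 / t ^ q := by
      rw [show p - 1 = -q by rw [hq]; ring, Real.rpow_neg ht0.le, one_div]
    rw [h2, h3, h4]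
  have key := one_add_mul_self_le_rpow_one_add (show (-1:ℝ) ≤ u - 1 by linarith)
    (show (1:ℝ) ≤ 1 + q by linarith)
  rw [show (1:ℝ) + (u-1) = u by ring] at key
  have key2 : u + q*(u-1) ≤ u ^ q * u := by
    have h5 : u ^ (1+q) = u ^ q * u := by
      rw [add_comm, Real.rpow_add hu0, Real.rpow_one]
    rw [← h5]; nlinarith [key]
  have key3 : 1 - q * (t-1)/(t+1) ≤ u ^ q := by
    rw [← sub_nonneg]
    have h4 : u ^ q - (1 - q * (t-1)/(t+1)) = (u ^ q * u - (u + q*(u-1))) / u := by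
      rw [hu]; field_simp; ring
    rw [h4]
    exact div_nonneg (by linarith) hu0.le
  have hm2 : m ^ (p-1-1) = m ^ (p-1) / m := by
    rw [Real.rpow_sub hm0, Real.rpow_one]
  have expand : ∀ P : ℝ, 1/2 * (p-1) * (P/m) * (t-1) + P * 1 = P * (1 - q * (t-1)/(t+1)) := by
    intro P
    rw [hm, hq]
    have h7 : t + 1 ≠ 0 := by linarith
    field_simp
    ring
  rw [htp, hm2, expand (m ^ (p-1))]
  exact mul_le_mul_of_nonneg_left key3 hP.le

lemma L3 {p t : ℝ} (hp0 : 0 < p) (hp1 : p ≤ 1) (ht : 1 ≤ t) :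
    ((t+1)/2) ^ (p-1) * (t-1) ≤ (t ^ p - 1)/p := by
  set F : ℝ → ℝ := fun s => (s ^ p - 1)/p - ((s+1)/2) ^ (p-1) * (s-1) with hF
  have hder : ∀ x ∈ Ici (1:ℝ), HasDerivAt F
      (p * x^(p-1)/p - (1/2 * (p-1) * ((x+1)/2) ^ (p-1-1) * (x-1) + ((x+1)/2) ^ (p-1) * 1)) x := by
    intro x hx
    have hx0 : (0:ℝ) < x := lt_of_lt_of_le one_pos hx
    have hmx : ((x+1)/2 : ℝ) ≠ 0 := by positivity
    have h1 : HasDerivAt (fun s : ℝ => (s ^ p - 1)/p) (p * x^(p-1)/p) x :=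
      ((Real.hasDerivAt_rpow_const (Or.inl hx0.ne')).sub_const 1).div_const p
    have h2 : HasDerivAt (fun s : ℝ => (s+1)/2) (1/2) x := by
      simpa using ((hasDerivAt_id x).add_const 1).div_const 2
    have h3 : HasDerivAt (fun s : ℝ => ((s+1)/2) ^ (p-1))
        (1/2 * (p-1) * ((x+1)/2) ^ (p-1-1)) x := h2.rpow_const (Or.inl hmx)
    have h4 : HasDerivAt (fun s : ℝ => s - 1) 1 x := (hasDerivAt_id x).sub_const 1
    have h5 := h1.sub (h3.mul h4)
    exact h5
  have hmono : MonotoneOn F (Ici 1) := by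
    apply monotoneOn_of_deriv_nonneg (convex_Ici 1)
      (fun x hx => (hder x hx).continuousAt.continuousWithinAt)
      (fun x hx => (hder x (interior_subset hx)).differentiableAt.differentiableWithinAt)
    intro x hx
    rw [interior_Ici] at hx
    rw [(hder x (mem_Ici.mpr (le_of_lt hx))).deriv]
    have h5 := derivL3 hp1 (le_of_lt hx)
    have h6 : p * x^(p-1)/p = x^(p-1) := by field_simp
    rw [h6]
    linarith
  have h0 : F 1 = 0 := by norm_num [hF]
  have hle := hmono (mem_Ici.mpr le_rfl) (mem_Ici.mpr ht) ht
  rw [h0] at hle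
  simp only [hF] at hle
  linarith

lemma L4 {p t : ℝ} (hp0 : 0 < p) (hp1 : p ≤ 1) (ht : 1 ≤ t) :
    (t ^ p - 1)/p ≤ (t ^ p - t ^ (p-1) + t - 1)/2 := by
  set q : ℝ := 1 - p with hq
  clear_value q
  have hq0 : 0 ≤ q := by rw [hq]; linarith
  have hq1 : q ≤ 1 := by rw [hq]; linarith
  set F : ℝ → ℝ := fun s => (s ^ p - s ^ (p-1) + s - 1)/2 - (s ^ p - 1)/p with hF
  have hder : ∀ x ∈ Ici (1:ℝ), HasDerivAt F
      ((p * x^(p-1) - (p-1) * x^(p-1-1) + 1)/2 - p * x^(p-1)/p) x := by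
    intro x hx
    have hx0 : (0:ℝ) < x := lt_of_lt_of_le one_pos hx
    have h1 : HasDerivAt (fun s : ℝ => s ^ p) (p * x^(p-1)) x :=
      Real.hasDerivAt_rpow_const (Or.inl hx0.ne')
    have h2 : HasDerivAt (fun s : ℝ => s ^ (p-1)) ((p-1) * x^(p-1-1)) x :=
      Real.hasDerivAt_rpow_const (Or.inl hx0.ne')
    have h3 : HasDerivAt (fun s : ℝ => s ^ p - s ^ (p-1) + s - 1)
        (p * x^(p-1) - (p-1) * x^(p-1-1) + 1) x := by
      simpa using (((h1.sub h2).add (hasDerivAt_id x)).sub_const 1)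
    exact (h3.div_const 2).sub ((h1.sub_const 1).div_const p)
  have hmono : MonotoneOn F (Ici 1) := by
    apply monotoneOn_of_deriv_nonneg (convex_Ici 1)
      (fun x hx => (hder x hx).continuousAt.continuousWithinAt)
      (fun x hx => (hder x (interior_subset hx)).differentiableAt.differentiableWithinAt)
    intro x hx
    rw [interior_Ici] at hx
    rw [(hder x (mem_Ici.mpr (le_of_lt hx))).deriv]
    have hx0 : (0:ℝ) < x := lt_trans one_pos hx
    have h6 : p * x^(p-1)/p = x^(p-1) := by field_simp
    rw [h6]
    set u : ℝ := x⁻¹ with hu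
    have hu0 : (0:ℝ) < u := by rw [hu]; positivity
    have hu1 : u ≤ 1 := by
      rw [hu, ← one_div, div_le_one hx0]; exact le_of_lt hx
    have e1 : x ^ (p-1) = u ^ q := by
      rw [hu, Real.inv_rpow hx0.le, ← Real.rpow_neg hx0.le]
      congr 1; rw [hq]; ring
    have e2 : x ^ (p-1-1) = u ^ q * u := by
      have h8 : u ^ q * u = u ^ (q+1) := by rw [Real.rpow_add hu0, Real.rpow_one]
      rw [h8, hu, Real.inv_rpow hx0.le, ← Real.rpow_neg hx0.le]
      congr 1; rw [hq]; ring
    have bern : u ^ q ≤ 1 + q * (u - 1) := by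
      have h9 := rpow_one_add_le_one_add_mul_self (show (-1:ℝ) ≤ u - 1 by linarith) hq0 hq1
      rw [show (1:ℝ) + (u-1) = u by ring] at h9
      exact h9
    have hf : (0:ℝ) ≤ 1 + q * (1 - u) := by nlinarith
    have hprod := mul_le_mul_of_nonneg_right bern hf
    have hx9 : (0:ℝ) ≤ u ^ q := Real.rpow_nonneg hu0.le q
    rw [e1, e2, show p = 1 - q by rw [hq]; ring]
    nlinarith [hprod, sq_nonneg (q * (u-1)), hx9]
  have h0 : F 1 = 0 := by norm_num [hF]
  have hle := hmono (mem_Ici.mpr le_rfl) (mem_Ici.mpr ht) ht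
  rw [h0] at hle
  simp only [hF] at hle
  linarith

end AuxStmt8

theorem stmt8 {n : Type*} [Fintype n] [DecidableEq n] {A B : Matrix n n ℂ}
    (hA : A.PosDef) (hB : B.PosDef) (hAB : loe A B)
    {p : ℝ} (hp0 : 0 < p) (hp1 : p ≤ 1) :
    loe 0 (A - A * B⁻¹ * A) ∧
    loe (A - A * B⁻¹ * A) (Kp A B p) ∧
    loe (Kp A B p) (TsallisEntropy A B p) ∧
    loe (TsallisEntropy A B p)
      ((1 / 2 : ℝ) • (natu A B p - natu A B (p - 1) + B - A)) ∧
    loe ((1 / 2 : ℝ) • (natu A B p - natu A B (p - 1) + B - A)) (B - A) := by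
  have hAsa : IsSelfAdjoint A := hA.1.isSelfAdjoint
  have specA : ∀ x ∈ spectrum ℝ A, (0:ℝ) < x := by
    rw [hA.1.spectrum_real_eq_range_eigenvalues]
    rintro x ⟨i, rfl⟩
    exact hA.eigenvalues_pos i
  set S := mrpow A (1/2) with hSdef
  set T := mrpow A (-(1/2)) with hTdef
  have hSsa : IsSelfAdjoint S := cfc_predicate _ A
  have hTsa : IsSelfAdjoint T := cfc_predicate _ A
  have hSh : S.IsHermitian := hSsa
  have hTh : T.IsHermitian := hTsa
  have hST : S * T = 1 := by
    rw [hSdef, hTdef, mrpow_mul_mrpow specA, show (1/2 : ℝ) + -(1/2) = 0 by norm_num,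
      mrpow_zero' hAsa]
  have hTS : T * S = 1 := by
    rw [hSdef, hTdef, mrpow_mul_mrpow specA, show -(1/2 : ℝ) + 1/2 = 0 by norm_num,
      mrpow_zero' hAsa]
  have hSS : S * S = A := by
    rw [hSdef, mrpow_mul_mrpow specA, show (1/2 : ℝ) + 1/2 = 1 by norm_num, mrpow_one' hAsa]
  have hA1 : mrpow A 1 = A := mrpow_one' hAsa
  have hAT : A * T = S := by
    rw [← hA1, hTdef, mrpow_mul_mrpow specA, show (1 : ℝ) + -(1/2) = 1/2 by norm_num]
  have hTA : T * A = S := by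
    rw [← hA1, hTdef, mrpow_mul_mrpow specA, show -(1/2 : ℝ) + 1 = 1/2 by norm_num]
  set C := T * B * T with hCdef
  have hCh : C.IsHermitian := by
    show Cᴴ = C
    rw [hCdef]
    simp [conjTranspose_mul, hTh.eq, hB.1.eq, Matrix.mul_assoc]
  have hCsa : IsSelfAdjoint C := hCh.isSelfAdjoint
  have hTAT : T * A * T = 1 := by rw [hTA, hST]
  have h1C : (C - 1).PosSemidef := by
    have h2 := loe_conj hTh hAB
    unfold loe at h2
    rw [hTAT, ← hCdef] at h2
    exact h2
  have specC : ∀ x ∈ spectrum ℝ C, (1:ℝ) ≤ x := by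
    intro x hx
    have hmem : x - 1 ∈ spectrum ℝ (C - 1) := spec_sub_one hx
    rw [(h1C.1).spectrum_real_eq_range_eigenvalues] at hmem
    obtain ⟨i, hi⟩ := hmem
    have h5 : (0:ℝ) ≤ x - 1 := hi ▸ h1C.eigenvalues_nonneg i
    linarith
  have specC0 : ∀ x ∈ spectrum ℝ C, (0:ℝ) < x :=
    fun x hx => lt_of_lt_of_le one_pos (specC x hx)
  have hCid : cfc (fun x : ℝ => x) C = C := cfc_id' ℝ C hCsa
  have hCone : cfc (fun _ : ℝ => (1:ℝ)) C = 1 := cfc_const_one ℝ C hCsa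
  have hB' : B = S * C * S := by
    have h6 : S * C * S = B := by
      rw [hCdef]
      simp only [← Matrix.mul_assoc]
      rw [hST, one_mul, Matrix.mul_assoc, hTS, mul_one]
    exact h6.symm
  set X1 := cfc (fun t : ℝ => t⁻¹) C with hX1
  have hCX1 : C * X1 = 1 := by
    conv_lhs => rw [← hCid]
    rw [hX1, cfc_mul_cfc_eq _ _ (fun _ => (1:ℝ))
      (fun x hx => mul_inv_cancel₀ (ne_of_gt (specC0 x hx))), hCone]
  have hBinv : B⁻¹ = T * X1 * T := by
    apply Matrix.inv_eq_right_inv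
    rw [hB']
    simp only [← Matrix.mul_assoc]
    rw [Matrix.mul_assoc (S * C) S T, hST, mul_one, Matrix.mul_assoc S C X1, hCX1,
      mul_one, hST]
  have hABA : A * B⁻¹ * A = S * X1 * S := by
    rw [hBinv]
    simp only [← Matrix.mul_assoc]
    rw [hAT, Matrix.mul_assoc (S * X1) T A, hTA]
  -- cfc expressions for each chain element
  have E0 : (0 : Matrix n n ℂ) = S * cfc (fun _ : ℝ => (0:ℝ)) C * S := by
    rw [cfc_const (0:ℝ) C hCsa, map_zero, mul_zero, zero_mul]
  have E1 : A - A * B⁻¹ * A = S * cfc (fun t : ℝ => 1 - t⁻¹) C * S := by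
    have e : cfc (fun t : ℝ => 1 - t⁻¹) C = 1 - X1 := by
      rw [cfc_sub (fun _ : ℝ => (1:ℝ)) (fun t : ℝ => t⁻¹) C (matContOn _ _) (matContOn _ _),
        hCone, hX1]
    rw [hABA, e, mul_sub, sub_mul, mul_one, hSS]
  have hC1 : C - 1 = cfc (fun t : ℝ => t - 1) C := by
    rw [cfc_sub (fun t : ℝ => t) (fun _ : ℝ => (1:ℝ)) C (matContOn _ _) (matContOn _ _),
      hCid, hCone]
  have hD : (1/2 : ℝ) • (C + 1) = cfc (fun t : ℝ => (1/2 : ℝ) • (t + 1)) C := by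
    rw [cfc_smul (1/2 : ℝ) (fun t : ℝ => t + 1) C (matContOn _ _),
      cfc_add C (fun t : ℝ => t) (fun _ : ℝ => (1:ℝ)) (matContOn _ _) (matContOn _ _),
      hCid, hCone]
  have hM : mrpow ((1/2 : ℝ) • (C + 1)) (p-1)
      = cfc (fun t : ℝ => ((1/2:ℝ) • (t+1)) ^ (p-1)) C := by
    rw [hD]
    exact (cfc_comp (fun s : ℝ => s ^ (p-1)) (fun t : ℝ => (1/2:ℝ) • (t+1)) C hCsa
      (finContOn ((Matrix.finite_real_spectrum (A := C)).image _) _) (matContOn _ _)).symm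
  have E2 : Kp A B p = S * cfc (fun t : ℝ => ((1/2:ℝ) • (t+1)) ^ (p-1) * (t - 1)) C * S := by
    show S * mrpow ((1/2 : ℝ) • (C + 1)) (p-1) * (C - 1) * S = _
    rw [hM, hC1, Matrix.mul_assoc S (cfc _ C) (cfc _ C),
      cfc_mul_cfc_eq _ _ _ (fun x _ => rfl)]
  have hcp : cfc (fun t : ℝ => t ^ p - 1) C = mrpow C p - 1 := by
    rw [cfc_sub (fun t : ℝ => t ^ p) (fun _ : ℝ => (1:ℝ)) C (matContOn _ _) (matContOn _ _),
      hCone]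
    rfl
  have E3 : TsallisEntropy A B p = S * cfc (fun t : ℝ => (1/p : ℝ) • (t ^ p - 1)) C * S := by
    show (1/p : ℝ) • (S * mrpow C p * S - A) = _
    rw [cfc_smul (1/p : ℝ) (fun t : ℝ => t ^ p - 1) C (matContOn _ _), hcp,
      mul_smul_comm, smul_mul_assoc, mul_sub, sub_mul, mul_one, hSS]
  have hinner : cfc (fun t : ℝ => t ^ p - t ^ (p-1) + t - 1) C
      = mrpow C p - mrpow C (p-1) + C - 1 := by
    rw [cfc_sub (fun t : ℝ => t ^ p - t ^ (p-1) + t) (fun _ : ℝ => (1:ℝ)) C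
        (matContOn _ _) (matContOn _ _),
      cfc_add C (fun t : ℝ => t ^ p - t ^ (p-1)) (fun t : ℝ => t)
        (matContOn _ _) (matContOn _ _),
      cfc_sub (fun t : ℝ => t ^ p) (fun t : ℝ => t ^ (p-1)) C
        (matContOn _ _) (matContOn _ _),
      hCid, hCone]
    rfl
  have E4 : (1 / 2 : ℝ) • (natu A B p - natu A B (p - 1) + B - A)
      = S * cfc (fun t : ℝ => (1/2 : ℝ) • (t ^ p - t ^ (p-1) + t - 1)) C * S := by
    show (1/2 : ℝ) • (S * mrpow C p * S - S * mrpow C (p-1) * S + B - A) = _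
    rw [cfc_smul (1/2 : ℝ) (fun t : ℝ => t ^ p - t ^ (p-1) + t - 1) C (matContOn _ _),
      hinner, mul_smul_comm, smul_mul_assoc]
    congr 1
    simp only [mul_sub, mul_add, sub_mul, add_mul, mul_one]
    rw [hSS, hB']
  have E5 : B - A = S * cfc (fun t : ℝ => t - 1) C * S := by
    rw [← hC1, mul_sub, sub_mul, mul_one, hSS, hB']
  refine ⟨?_, ?_, ?_, ?_, ?_⟩
  · rw [E0, E1]
    refine loe_conj hSh (loe_cfc hCh fun x hx => ?_)
    have h0 : (0:ℝ) < x := specC0 x hx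
    have h1 : x⁻¹ ≤ 1 := by rw [← one_div, div_le_one h0]; exact specC x hx
    linarith
  · rw [E1, E2]
    refine loe_conj hSh (loe_cfc hCh fun x hx => ?_)
    have hx1 : (1:ℝ) ≤ x := specC x hx
    have h0 : (0:ℝ) < x := specC0 x hx
    rw [smul_eq_mul]
    have e : 1 - x⁻¹ = x⁻¹ * (x - 1) := by field_simp
    have b2 : x ^ (-1:ℝ) ≤ x ^ (p-1) :=
      Real.rpow_le_rpow_of_exponent_le hx1 (by linarith)
    have b3 : x ^ (p-1) ≤ ((1/2)*(x+1)) ^ (p-1) :=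
      Real.rpow_le_rpow_of_nonpos (by linarith) (by linarith) (by linarith)
    calc 1 - x⁻¹ = x⁻¹ * (x-1) := e
      _ ≤ ((1/2)*(x+1)) ^ (p-1) * (x-1) := by
          refine mul_le_mul_of_nonneg_right ?_ (by linarith)
          rw [← Real.rpow_neg_one x]
          exact le_trans b2 b3
  · rw [E2, E3]
    refine loe_conj hSh (loe_cfc hCh fun x hx => ?_)
    have h := L3 hp0 hp1 (specC x hx)
    rw [smul_eq_mul, smul_eq_mul, show (1/2:ℝ)*(x+1) = (x+1)/2 by ring,
      show (1/p:ℝ)*(x^p-1) = (x^p-1)/p by ring]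
    exact h
  · rw [E3, E4]
    refine loe_conj hSh (loe_cfc hCh fun x hx => ?_)
    have h := L4 hp0 hp1 (specC x hx)
    rw [smul_eq_mul, smul_eq_mul, show (1/p:ℝ)*(x^p-1) = (x^p-1)/p by ring,
      show (1/2:ℝ)*(x^p - x^(p-1) + x - 1) = (x^p - x^(p-1) + x - 1)/2 by ring]
    exact h
  · rw [E4, E5]
    refine loe_conj hSh (loe_cfc hCh fun x hx => ?_)
    have hx1 : (1:ℝ) ≤ x := specC x hx
    have h0 : (0:ℝ) < x := lt_of_lt_of_le one_pos hx1
    have b : x ^ p = x ^ (p-1) * x := by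
      have b0 := Real.rpow_add h0 (p-1) 1
      rw [show p - 1 + 1 = p by ring, Real.rpow_one] at b0
      exact b0
    have c : x ^ (p-1) ≤ 1 := Real.rpow_le_one_of_one_le_of_nonpos hx1 (by linarith)
    rw [smul_eq_mul]
    nlinarith [mul_le_mul_of_nonneg_right c (show (0:ℝ) ≤ x - 1 by linarith)]
end

section
/- Let A and B be n×n complex positive definite matrices with B ≤ A in the Loewner order, and let p ∈ (0,1]. Then the chain A #_p B − A ♮_{p−1} B ≤ (1/2)·(A #_p B − A ♮_{p−1} B + B − A) ≤ T_p(A|B) ≤ K_p(A,B) ≤ A ♮_{p+1} B − A #_p B ≤ 0 holds in the Loewner order. -/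
open Matrix ComplexOrder

set_option linter.unusedSectionVars false
set_option linter.unusedVariables false

section ProofHelpers

private lemma rpow_mul_rpow {t : ℝ} (ht : 0 < t) {a b c : ℝ} (h : a + b = c) :
    t ^ a * t ^ b = t ^ c := by rw [← Real.rpow_add ht, h]

private lemma bern {t q : ℝ} (ht : 0 ≤ t) (hq : 1 ≤ q) : q * t + (1 - q) ≤ t ^ q := by
  have h := one_add_mul_self_le_rpow_one_add (s := t - 1) (by linarith) (p := q) hq
  have h2 : 1 + (t - 1) = t := by ring
  rw [h2] at h
  linarith

private lemma key_ineq {t p : ℝ} (ht : 0 < t) (hp : p ≤ 1) :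
    (2 - p) * t ^ (p - 1) + (p - 1) * t ^ (p - 2) ≤ 1 := by
  have hb : (2 - p) * t + (p - 1) ≤ t ^ (2 - p) := by
    have := bern ht.le (q := 2 - p) (by linarith); linarith
  have h1 : t ^ (2 - p) * t ^ (p - 2) = t ^ (0:ℝ) := rpow_mul_rpow ht (by ring)
  rw [Real.rpow_zero] at h1
  have h2 : t * t ^ (p - 2) = t ^ (p - 1) := by
    nth_rewrite 1 [← Real.rpow_one t]
    exact rpow_mul_rpow ht (by ring)
  have h3 : (0:ℝ) < t ^ (p - 2) := Real.rpow_pos_of_pos ht _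
  calc (2 - p) * t ^ (p - 1) + (p - 1) * t ^ (p - 2)
      = ((2 - p) * t + (p - 1)) * t ^ (p - 2) := by rw [← h2]; ring
    _ ≤ t ^ (2 - p) * t ^ (p - 2) := mul_le_mul_of_nonneg_right hb h3.le
    _ = 1 := h1

private lemma key_ineq3 {t p : ℝ} (ht : 0 < t) (hp : p ≤ 1) :
    ((t + 1) / 2) ^ (p - 2) * ((p * t + (2 - p)) / 2) ≤ t ^ (p - 1) := by
  set m : ℝ := (t + 1) / 2 with hm
  have hm0 : 0 < m := by rw [hm]; linarith
  have hv0 : 0 < m / t := div_pos hm0 ht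
  have hb : (2 - p) * (m / t) + (p - 1) ≤ (m / t) ^ (2 - p) := by
    have := bern hv0.le (q := 2 - p) (by linarith); linarith
  have hvt : m / t * t = m := div_mul_cancel₀ _ ht.ne'
  -- multiply hb by t^(2-p)
  have ht2p : (0:ℝ) < t ^ (2 - p) := Real.rpow_pos_of_pos ht _
  have hstep := mul_le_mul_of_nonneg_right hb ht2p.le
  have hrhs : (m / t) ^ (2 - p) * t ^ (2 - p) = m ^ (2 - p) := by
    rw [← Real.mul_rpow hv0.le ht.le, hvt]
  have ht_split : t ^ (2 - p) = t * t ^ (1 - p) := by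
    nth_rewrite 2 [← Real.rpow_one t]
    rw [rpow_mul_rpow ht (by ring : (1:ℝ) + (1 - p) = 2 - p)]
  have hB' : (2 - p) * m * t ^ (1 - p) + (p - 1) * t ^ (2 - p) ≤ m ^ (2 - p) := by
    have hlhs : ((2 - p) * (m / t) + (p - 1)) * t ^ (2 - p)
        = (2 - p) * m * t ^ (1 - p) + (p - 1) * t ^ (2 - p) := by
      rw [ht_split]
      field_simp
    rw [hlhs, hrhs] at hstep
    exact hstep
  set X : ℝ := m ^ (p - 2) with hX
  set Y : ℝ := t ^ (p - 1) with hY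
  have hX0 : 0 < X := Real.rpow_pos_of_pos hm0 _
  have hY0 : 0 < Y := Real.rpow_pos_of_pos ht _
  have e1 : t ^ (1 - p) * Y = 1 := by
    rw [hY, rpow_mul_rpow ht (by ring : (1:ℝ) - p + (p - 1) = 0), Real.rpow_zero]
  have e2 : t ^ (2 - p) * Y = t := by
    rw [hY, rpow_mul_rpow ht (by ring : (2:ℝ) - p + (p - 1) = 1), Real.rpow_one]
  have e3 : m ^ (2 - p) * X = 1 := by
    rw [hX, rpow_mul_rpow hm0 (by ring : (2:ℝ) - p + (p - 2) = 0), Real.rpow_zero]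
  have step2 := mul_le_mul_of_nonneg_right hB' (mul_nonneg hX0.le hY0.le)
  have lhs_eq : ((2 - p) * m * t ^ (1 - p) + (p - 1) * t ^ (2 - p)) * (X * Y)
      = X * ((p * t + (2 - p)) / 2) := by
    calc ((2 - p) * m * t ^ (1 - p) + (p - 1) * t ^ (2 - p)) * (X * Y)
        = ((2 - p) * m * (t ^ (1 - p) * Y) + (p - 1) * (t ^ (2 - p) * Y)) * X := by ring
      _ = ((2 - p) * m + (p - 1) * t) * X := by rw [e1, e2]; ring
      _ = X * ((p * t + (2 - p)) / 2) := by rw [hm]; ring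
  have rhs_eq : m ^ (2 - p) * (X * Y) = Y := by
    calc m ^ (2 - p) * (X * Y) = (m ^ (2 - p) * X) * Y := by ring
      _ = Y := by rw [e3, one_mul]
  rw [lhs_eq, rhs_eq] at step2
  linarith





private lemma scalar2 {t p : ℝ} (ht0 : 0 < t) (ht1 : t ≤ 1) (hp0 : 0 < p) (hp1 : p ≤ 1) :
    p / 2 * ((t ^ (p - 1) + 1) * (t - 1)) ≤ t ^ p - 1 := by
  set F : ℝ → ℝ := fun x => x ^ p - 1 - p / 2 * ((x ^ (p - 1) + 1) * (x - 1)) with hF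
  have hder : ∀ x : ℝ, 0 < x →
      HasDerivAt F (p * x ^ (p - 1) - p / 2 * (((p - 1) * x ^ (p - 2)) * (x - 1)
        + (x ^ (p - 1) + 1) * 1)) x := by
    intro x hx
    have h1 : HasDerivAt (fun y : ℝ => y ^ p) (p * x ^ (p - 1)) x :=
      Real.hasDerivAt_rpow_const (Or.inl hx.ne')
    have h2 : HasDerivAt (fun y : ℝ => y ^ (p - 1)) ((p - 1) * x ^ (p - 2)) x := by
      have := Real.hasDerivAt_rpow_const (x := x) (p := p - 1) (Or.inl hx.ne')
      have e : p - 1 - 1 = p - 2 := by ring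
      rwa [e] at this
    exact (h1.sub_const 1).sub
      ((((h2.add_const 1).mul ((hasDerivAt_id x).sub_const 1)).const_mul (p / 2)))
  have hanti : AntitoneOn F (Set.Icc t 1) := by
    apply antitoneOn_of_deriv_nonpos (convex_Icc t 1)
    · intro x hx
      exact ((hder x (lt_of_lt_of_le ht0 hx.1)).continuousAt).continuousWithinAt
    · intro x hx
      rw [interior_Icc] at hx
      exact ((hder x (lt_trans ht0 hx.1)).differentiableAt).differentiableWithinAt
    · intro x hx
      rw [interior_Icc] at hx
      have hx0 : 0 < x := lt_trans ht0 hx.1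
      rw [(hder x hx0).deriv]
      have hkey := key_ineq hx0 hp1
      have hx2 : x * x ^ (p - 2) = x ^ (p - 1) := by
        nth_rewrite 1 [← Real.rpow_one x]
        exact rpow_mul_rpow hx0 (by ring)
      have e : (p - 1) * x ^ (p - 2) * (x - 1)
          = (p - 1) * x ^ (p - 1) - (p - 1) * x ^ (p - 2) := by rw [← hx2]; ring
      rw [e]
      have hint := mul_le_mul_of_nonneg_left hkey (by positivity : (0:ℝ) ≤ p / 2)
      linarith [hint]
  have hmem1 : t ∈ Set.Icc t 1 := Set.left_mem_Icc.mpr ht1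
  have hmem2 : (1:ℝ) ∈ Set.Icc t 1 := Set.right_mem_Icc.mpr ht1
  have := hanti hmem1 hmem2 ht1
  have hF1 : F 1 = 0 := by simp [hF, Real.one_rpow]
  rw [hF1] at this
  simp only [hF] at this
  linarith

private lemma scalar3 {t p : ℝ} (ht0 : 0 < t) (ht1 : t ≤ 1) (hp0 : 0 < p) (hp1 : p ≤ 1) :
    t ^ p - 1 ≤ p * (((t + 1) / 2) ^ (p - 1) * (t - 1)) := by
  set G : ℝ → ℝ := fun x => p * (((x + 1) / 2) ^ (p - 1) * (x - 1)) - (x ^ p - 1) with hG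
  have hder : ∀ x : ℝ, 0 < x →
      HasDerivAt G (p * ((((p - 1) * ((x + 1) / 2) ^ (p - 2)) * (1 / 2)) * (x - 1)
        + ((x + 1) / 2) ^ (p - 1) * 1) - p * x ^ (p - 1)) x := by
    intro x hx
    have hm0 : (0:ℝ) < (x + 1) / 2 := by linarith
    have h1 : HasDerivAt (fun y : ℝ => y ^ p) (p * x ^ (p - 1)) x :=
      Real.hasDerivAt_rpow_const (Or.inl hx.ne')
    have hin : HasDerivAt (fun y : ℝ => (y + 1) / 2) (1 / 2) x := by
      simpa using ((hasDerivAt_id x).add_const 1).div_const 2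
    have hout : HasDerivAt (fun z : ℝ => z ^ (p - 1))
        ((p - 1) * ((x + 1) / 2) ^ (p - 2)) ((x + 1) / 2) := by
      have := Real.hasDerivAt_rpow_const (x := (x + 1) / 2) (p := p - 1) (Or.inl hm0.ne')
      have e : p - 1 - 1 = p - 2 := by ring
      rwa [e] at this
    have hcomp : HasDerivAt (fun y : ℝ => ((y + 1) / 2) ^ (p - 1))
        (((p - 1) * ((x + 1) / 2) ^ (p - 2)) * (1 / 2)) x := by
      exact hout.comp x hin
    exact (((hcomp.mul ((hasDerivAt_id x).sub_const 1)).const_mul p).sub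
      (h1.sub_const 1)).congr_deriv (by simp only [id_eq]; try ring)
  have hanti : AntitoneOn G (Set.Icc t 1) := by
    apply antitoneOn_of_deriv_nonpos (convex_Icc t 1)
    · intro x hx
      exact ((hder x (lt_of_lt_of_le ht0 hx.1)).continuousAt).continuousWithinAt
    · intro x hx
      rw [interior_Icc] at hx
      exact ((hder x (lt_trans ht0 hx.1)).differentiableAt).differentiableWithinAt
    · intro x hx
      rw [interior_Icc] at hx
      have hx0 : 0 < x := lt_trans ht0 hx.1
      rw [(hder x hx0).deriv]
      have hm0 : (0:ℝ) < (x + 1) / 2 := by linarith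
      have hkey := key_ineq3 hx0 hp1
      have hm1 : ((x + 1) / 2) ^ (p - 2) * ((x + 1) / 2) = ((x + 1) / 2) ^ (p - 1) := by
        nth_rewrite 2 [← Real.rpow_one ((x + 1) / 2)]
        exact rpow_mul_rpow hm0 (by ring)
      have e : (p - 1) * ((x + 1) / 2) ^ (p - 2) * (1 / 2) * (x - 1) + ((x + 1) / 2) ^ (p - 1) * 1
          = ((x + 1) / 2) ^ (p - 2) * ((p * x + (2 - p)) / 2) := by rw [← hm1]; ring
      rw [e]
      have hint := mul_le_mul_of_nonneg_left hkey hp0.le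
      linarith [hint]
  have hmem1 : t ∈ Set.Icc t 1 := Set.left_mem_Icc.mpr ht1
  have hmem2 : (1:ℝ) ∈ Set.Icc t 1 := Set.right_mem_Icc.mpr ht1
  have := hanti hmem1 hmem2 ht1
  have hG1 : G 1 = 0 := by simp [hG, Real.one_rpow]
  rw [hG1] at this
  simp only [hG] at this
  linarith





private lemma tq_mul {t p : ℝ} (ht0 : 0 < t) : t ^ (p - 1) * t = t ^ p := by
  nth_rewrite 2 [← Real.rpow_one t]
  exact rpow_mul_rpow ht0 (by ring)

private lemma sc1 {t p : ℝ} (ht0 : 0 < t) (ht1 : t ≤ 1) (hp0 : 0 < p) (hp1 : p ≤ 1) :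
    t ^ p - t ^ (p - 1) ≤ 1 / 2 * (t ^ p - t ^ (p - 1) + t - 1) := by
  have h1 : (1:ℝ) ≤ t ^ (p - 1) :=
    Real.one_le_rpow_of_pos_of_le_one_of_nonpos ht0 ht1 (by linarith)
  have h2 := tq_mul (p := p) ht0
  nlinarith [mul_nonneg (sub_nonneg.mpr h1) (sub_nonneg.mpr ht1)]

private lemma sc2 {t p : ℝ} (ht0 : 0 < t) (ht1 : t ≤ 1) (hp0 : 0 < p) (hp1 : p ≤ 1) :
    1 / 2 * (t ^ p - t ^ (p - 1) + t - 1) ≤ 1 / p * (t ^ p - 1) := by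
  have h2 := tq_mul (p := p) ht0
  have hs := scalar2 ht0 ht1 hp0 hp1
  have hexp : (t ^ (p - 1) + 1) * (t - 1) = t ^ p - t ^ (p - 1) + t - 1 := by
    rw [← h2]; ring
  rw [hexp] at hs
  have := mul_le_mul_of_nonneg_left hs (le_of_lt (one_div_pos.mpr hp0))
  have heq : 1 / p * (p / 2 * (t ^ p - t ^ (p - 1) + t - 1))
      = 1 / 2 * (t ^ p - t ^ (p - 1) + t - 1) := by
    field_simp
  linarith [heq ▸ this]

private lemma sc3 {t p : ℝ} (ht0 : 0 < t) (ht1 : t ≤ 1) (hp0 : 0 < p) (hp1 : p ≤ 1) :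
    1 / p * (t ^ p - 1) ≤ (1 / 2 * (t + 1)) ^ (p - 1) * (t - 1) := by
  have hbase : (1 / 2 * (t + 1) : ℝ) = (t + 1) / 2 := by ring
  rw [hbase]
  have hs := scalar3 ht0 ht1 hp0 hp1
  have := mul_le_mul_of_nonneg_left hs (le_of_lt (one_div_pos.mpr hp0))
  have heq : 1 / p * (p * (((t + 1) / 2) ^ (p - 1) * (t - 1)))
      = ((t + 1) / 2) ^ (p - 1) * (t - 1) := by
    field_simp
  linarith [heq ▸ this]

private lemma sc4 {t p : ℝ} (ht0 : 0 < t) (ht1 : t ≤ 1) (hp0 : 0 < p) (hp1 : p ≤ 1) :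
    (1 / 2 * (t + 1)) ^ (p - 1) * (t - 1) ≤ t ^ (p + 1) - t ^ p := by
  have hbase : (1 / 2 * (t + 1) : ℝ) = (t + 1) / 2 := by ring
  rw [hbase]
  have hm0 : (0:ℝ) < (t + 1) / 2 := by linarith
  have hm1 : (1:ℝ) ≤ ((t + 1) / 2) ^ (p - 1) :=
    Real.one_le_rpow_of_pos_of_le_one_of_nonpos hm0 (by linarith) (by linarith)
  have htp : t ^ p ≤ 1 := Real.rpow_le_one ht0.le ht1 hp0.le
  have h2 : t ^ p * t = t ^ (p + 1) := by
    nth_rewrite 2 [← Real.rpow_one t]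
    exact rpow_mul_rpow ht0 (by ring)
  have hmul : ((t + 1) / 2) ^ (p - 1) * (t - 1) ≤ t ^ p * (t - 1) :=
    mul_le_mul_of_nonpos_right (le_trans htp hm1) (by linarith)
  nlinarith [hmul, h2]

private lemma sc5 {t p : ℝ} (ht0 : 0 < t) (ht1 : t ≤ 1) (hp0 : 0 < p) (hp1 : p ≤ 1) :
    t ^ (p + 1) - t ^ p ≤ 0 := by
  have h2 : t ^ p * t = t ^ (p + 1) := by
    nth_rewrite 2 [← Real.rpow_one t]
    exact rpow_mul_rpow ht0 (by ring)
  nlinarith [Real.rpow_pos_of_pos ht0 p, h2]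


open Matrix ComplexOrder

section HcfcLemmas
variable {n : Type*} [Fintype n] [DecidableEq n] {C : Matrix n n ℂ} (hC : C.IsHermitian)

private lemma diag_congr {v w : n → ℂ} (h : ∀ i, v i = w i) :
    Matrix.diagonal v = Matrix.diagonal w := by
  exact congrArg Matrix.diagonal (funext h)

private lemma hcfc_mul (f g : ℝ → ℝ) :
    hC.cfc f * hC.cfc g = hC.cfc fun t => f t * g t := by
  have key : ∀ (a b c d e f : Matrix n n ℂ), (a*b*c)*(d*e*f) = a*(b*(c*d)*e)*f := by
    intros; simp only [mul_assoc]
  rw [Matrix.IsHermitian.cfc, Matrix.IsHermitian.cfc, Matrix.IsHermitian.cfc, Unitary.conjStarAlgAut_apply, Unitary.conjStarAlgAut_apply, Unitary.conjStarAlgAut_apply, key]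
  simp only [SetLike.coe_mem, Unitary.star_mul_self_of_mem, mul_one, diagonal_mul_diagonal]
  rw [diag_congr fun i => ?_]
  simp

private lemma hcfc_congr {f g : ℝ → ℝ} (h : ∀ i, f (hC.eigenvalues i) = g (hC.eigenvalues i)) :
    hC.cfc f = hC.cfc g := by
  rw [Matrix.IsHermitian.cfc, Matrix.IsHermitian.cfc,
    diag_congr fun i => ?_]
  simp [h i]

private lemma hcfc_one : hC.cfc (fun _ => (1:ℝ)) = 1 := by
  rw [Matrix.IsHermitian.cfc]
  have h1 : Matrix.diagonal (RCLike.ofReal ∘ (fun _ => (1:ℝ)) ∘ hC.eigenvalues)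
      = (1 : Matrix n n ℂ) := by
    rw [← Matrix.diagonal_one]; exact diag_congr fun i => by simp
  rw [h1, Unitary.conjStarAlgAut_apply, mul_one, Unitary.mul_star_self_of_mem (SetLike.coe_mem _)]

private lemma hcfc_id : hC.cfc (fun t => t) = C := by
  rw [Matrix.IsHermitian.cfc]
  exact hC.spectral_theorem.symm

private lemma hcfc_sub (f g : ℝ → ℝ) :
    hC.cfc f - hC.cfc g = hC.cfc fun t => f t - g t := by
  rw [Matrix.IsHermitian.cfc, Matrix.IsHermitian.cfc, Matrix.IsHermitian.cfc, Unitary.conjStarAlgAut_apply, Unitary.conjStarAlgAut_apply, Unitary.conjStarAlgAut_apply,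
    ← sub_mul, ← mul_sub, Matrix.diagonal_sub, diag_congr fun i => ?_]
  simp

private lemma hcfc_add (f g : ℝ → ℝ) :
    hC.cfc f + hC.cfc g = hC.cfc fun t => f t + g t := by
  rw [Matrix.IsHermitian.cfc, Matrix.IsHermitian.cfc, Matrix.IsHermitian.cfc, Unitary.conjStarAlgAut_apply, Unitary.conjStarAlgAut_apply, Unitary.conjStarAlgAut_apply,
    ← add_mul, ← mul_add, Matrix.diagonal_add, diag_congr fun i => ?_]
  simp

private lemma hcfc_smul (r : ℝ) (f : ℝ → ℝ) :
    r • hC.cfc f = hC.cfc fun t => r * f t := by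
  rw [Matrix.IsHermitian.cfc, Matrix.IsHermitian.cfc, Unitary.conjStarAlgAut_apply, Unitary.conjStarAlgAut_apply, ← smul_mul_assoc, ← mul_smul_comm,
    ← Matrix.diagonal_smul, diag_congr fun i => ?_]
  simp [Complex.real_smul]

private lemma hcfc_zero : hC.cfc (fun _ => (0:ℝ)) = 0 := by
  rw [Matrix.IsHermitian.cfc]
  have h1 : Matrix.diagonal (RCLike.ofReal ∘ (fun _ => (0:ℝ)) ∘ hC.eigenvalues)
      = (0 : Matrix n n ℂ) := by
    rw [← Matrix.diagonal_zero]; exact diag_congr fun i => by simp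
  rw [h1, Unitary.conjStarAlgAut_apply, mul_zero, zero_mul]

private lemma hcfc_herm (f : ℝ → ℝ) : (hC.cfc f).IsHermitian := by
  rw [Matrix.IsHermitian.cfc]
  have hd : (Matrix.diagonal (RCLike.ofReal ∘ f ∘ hC.eigenvalues) : Matrix n n ℂ)ᴴ
      = Matrix.diagonal (RCLike.ofReal ∘ f ∘ hC.eigenvalues) := by
    rw [Matrix.diagonal_conjTranspose]
    exact diag_congr fun i => by simp [Pi.star_def, Complex.conj_ofReal]
  show _ᴴ = _
  rw [Unitary.conjStarAlgAut_apply, Matrix.conjTranspose_mul, Matrix.conjTranspose_mul, hd,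
    ← Matrix.star_eq_conjTranspose (star (hC.eigenvectorUnitary : Matrix n n ℂ)), star_star,
    ← Matrix.star_eq_conjTranspose (hC.eigenvectorUnitary : Matrix n n ℂ), mul_assoc]

private lemma hcfc_psd {f : ℝ → ℝ} (h : ∀ i, 0 ≤ f (hC.eigenvalues i)) :
    (hC.cfc f).PosSemidef := by
  rw [Matrix.IsHermitian.cfc]
  have hd : (Matrix.diagonal (RCLike.ofReal ∘ f ∘ hC.eigenvalues) : Matrix n n ℂ).PosSemidef :=
    Matrix.PosSemidef.diagonal fun i => Complex.zero_le_real.mpr (h i)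
  have h2 := hd.mul_mul_conjTranspose_same (hC.eigenvectorUnitary : Matrix n n ℂ)
  rwa [← Matrix.star_eq_conjTranspose] at h2

private lemma hcfc_psd_eigen {f : ℝ → ℝ} (h : (hC.cfc f).PosSemidef) :
    ∀ i, 0 ≤ f (hC.eigenvalues i) := by
  have h2 := h.mul_mul_conjTranspose_same (star (hC.eigenvectorUnitary : Matrix n n ℂ))
  have h3 : star (hC.eigenvectorUnitary : Matrix n n ℂ) * hC.cfc f *
      (star (hC.eigenvectorUnitary : Matrix n n ℂ))ᴴ
      = Matrix.diagonal (RCLike.ofReal ∘ f ∘ hC.eigenvalues) := by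
    rw [← Matrix.star_eq_conjTranspose, star_star, Matrix.IsHermitian.cfc, Unitary.conjStarAlgAut_apply]
    have key : ∀ (u d : Matrix n n ℂ),
        star u * (u * d * star u) * u = (star u * u) * d * (star u * u) := by
      intros; simp only [mul_assoc]
    rw [key, Unitary.star_mul_self_of_mem (SetLike.coe_mem _), one_mul, mul_one]
  rw [h3] at h2
  intro i
  exact Complex.zero_le_real.mp (Matrix.posSemidef_diagonal_iff.mp h2 i)

end HcfcLemmas

end ProofHelpers

theorem stmt9 {n : Type*} [Fintype n] [DecidableEq n] {A B : Matrix n n ℂ}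
    (hA : A.PosDef) (hB : B.PosDef) (hBA : loe B A)
    {p : ℝ} (hp0 : 0 < p) (hp1 : p ≤ 1) :
    loe (natu A B p - natu A B (p - 1))
      ((1 / 2 : ℝ) • (natu A B p - natu A B (p - 1) + B - A)) ∧
    loe ((1 / 2 : ℝ) • (natu A B p - natu A B (p - 1) + B - A)) (TsallisEntropy A B p) ∧
    loe (TsallisEntropy A B p) (Kp A B p) ∧
    loe (Kp A B p) (natu A B (p + 1) - natu A B p) ∧
    loe (natu A B (p + 1) - natu A B p) 0 := by
  have hA1 : A.IsHermitian := hA.1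
  have hApos : ∀ i, 0 < hA1.eigenvalues i := fun i => hA.eigenvalues_pos i
  have hS : mrpow A (1 / 2) = hA1.cfc (fun t => t ^ (1/2 : ℝ)) := hA1.cfc_eq _
  have hSm : mrpow A (-(1 / 2)) = hA1.cfc (fun t => t ^ (-(1/2) : ℝ)) := hA1.cfc_eq _
  have hSh : (mrpow A (1 / 2)).IsHermitian := by rw [hS]; exact hcfc_herm hA1 _
  have hSmh : (mrpow A (-(1 / 2))).IsHermitian := by rw [hSm]; exact hcfc_herm hA1 _
  have mulSS : mrpow A (1 / 2) * mrpow A (1 / 2) = A := by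
    rw [hS, hcfc_mul hA1, hcfc_congr hA1 (g := fun t => t) (fun i => by
      rw [rpow_mul_rpow (hApos i) (by norm_num : (1/2:ℝ) + 1/2 = 1), Real.rpow_one]),
      hcfc_id hA1]
  have mulSSm : mrpow A (1 / 2) * mrpow A (-(1 / 2)) = 1 := by
    rw [hS, hSm, hcfc_mul hA1, hcfc_congr hA1 (g := fun _ => (1:ℝ)) (fun i => by
      rw [rpow_mul_rpow (hApos i) (by norm_num : (1/2:ℝ) + -(1/2) = 0), Real.rpow_zero]),
      hcfc_one hA1]
  have mulSmS : mrpow A (-(1 / 2)) * mrpow A (1 / 2) = 1 := by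
    rw [hS, hSm, hcfc_mul hA1, hcfc_congr hA1 (g := fun _ => (1:ℝ)) (fun i => by
      rw [rpow_mul_rpow (hApos i) (by norm_num : (-(1/2):ℝ) + 1/2 = 0), Real.rpow_zero]),
      hcfc_one hA1]
  have hCh : (mrpow A (-(1 / 2)) * B * mrpow A (-(1 / 2))).IsHermitian := by
    show _ᴴ = _
    rw [Matrix.conjTranspose_mul, Matrix.conjTranspose_mul, hSmh.eq, hB.1.eq, ← mul_assoc]
  have hCpd : (mrpow A (-(1 / 2)) * B * mrpow A (-(1 / 2))).PosDef := by
    refine Matrix.PosDef.of_dotProduct_mulVec_pos hCh fun x hx => ?_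
    have hx' : mrpow A (-(1 / 2)) *ᵥ x ≠ 0 := by
      intro h0
      apply hx
      have hxx : mrpow A (1 / 2) *ᵥ (mrpow A (-(1 / 2)) *ᵥ x) = x := by
        rw [Matrix.mulVec_mulVec, mulSSm, Matrix.one_mulVec]
      rw [h0, Matrix.mulVec_zero] at hxx
      exact hxx.symm
    have h2 := hB.dotProduct_mulVec_pos hx'
    simpa only [Matrix.star_mulVec, Matrix.dotProduct_mulVec, Matrix.vecMul_vecMul,
      hSmh.eq, mul_assoc] using h2
  have he0 : ∀ i, 0 < hCh.eigenvalues i := fun i => hCpd.eigenvalues_pos i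
  have hSmASm : mrpow A (-(1 / 2)) * A * mrpow A (-(1 / 2)) = 1 := by
    calc mrpow A (-(1 / 2)) * A * mrpow A (-(1 / 2))
        = hA1.cfc (fun t => t ^ (-(1/2):ℝ)) * hA1.cfc (fun t => t) *
          hA1.cfc (fun t => t ^ (-(1/2):ℝ)) := by rw [hcfc_id hA1, ← hSm]
      _ = hA1.cfc (fun t => t ^ (-(1/2):ℝ) * t * t ^ (-(1/2):ℝ)) := by
          rw [hcfc_mul hA1, hcfc_mul hA1]
      _ = hA1.cfc (fun _ => (1:ℝ)) := hcfc_congr hA1 fun i => by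
          have h1 : hA1.eigenvalues i ^ (-(1/2):ℝ) * hA1.eigenvalues i
              = hA1.eigenvalues i ^ (1/2:ℝ) := by
            nth_rewrite 2 [← Real.rpow_one (hA1.eigenvalues i)]
            exact rpow_mul_rpow (hApos i) (by norm_num)
          rw [h1, rpow_mul_rpow (hApos i) (by norm_num : (1/2:ℝ) + -(1/2) = 0), Real.rpow_zero]
      _ = 1 := hcfc_one hA1
  have hBform : mrpow A (1 / 2) * hCh.cfc (fun t => t) * mrpow A (1 / 2) = B := by
    rw [hcfc_id hCh]
    calc mrpow A (1 / 2) * (mrpow A (-(1 / 2)) * B * mrpow A (-(1 / 2))) * mrpow A (1 / 2)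
        = (mrpow A (1 / 2) * mrpow A (-(1 / 2))) * B *
          (mrpow A (-(1 / 2)) * mrpow A (1 / 2)) := by simp only [mul_assoc]
      _ = B := by rw [mulSSm, mulSmS, one_mul, mul_one]
  have hAform : mrpow A (1 / 2) * hCh.cfc (fun _ => (1:ℝ)) * mrpow A (1 / 2) = A := by
    rw [hcfc_one hCh, mul_one, mulSS]
  have hCle : (1 - (mrpow A (-(1 / 2)) * B * mrpow A (-(1 / 2)))).PosSemidef := by
    have h1 : 1 - (mrpow A (-(1 / 2)) * B * mrpow A (-(1 / 2)))
        = mrpow A (-(1 / 2)) * (A - B) * mrpow A (-(1 / 2)) := by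
      calc 1 - (mrpow A (-(1 / 2)) * B * mrpow A (-(1 / 2)))
          = mrpow A (-(1 / 2)) * A * mrpow A (-(1 / 2)) -
            mrpow A (-(1 / 2)) * B * mrpow A (-(1 / 2)) := by rw [hSmASm]
        _ = mrpow A (-(1 / 2)) * (A - B) * mrpow A (-(1 / 2)) := by rw [mul_sub, sub_mul]
    rw [h1]
    have h2 := (hBA : (A - B).PosSemidef).mul_mul_conjTranspose_same (mrpow A (-(1 / 2)))
    rwa [hSmh.eq] at h2
  have he1 : ∀ i, hCh.eigenvalues i ≤ 1 := by
    intro i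
    have honeC : hCh.cfc (fun t => 1 - t)
        = 1 - (mrpow A (-(1 / 2)) * B * mrpow A (-(1 / 2))) := by
      calc hCh.cfc (fun t => 1 - t)
          = hCh.cfc (fun _ => (1:ℝ)) - hCh.cfc (fun t => t) := (hcfc_sub hCh _ _).symm
        _ = 1 - (mrpow A (-(1 / 2)) * B * mrpow A (-(1 / 2))) := by
            rw [hcfc_one hCh, hcfc_id hCh]
    have hpsd : (hCh.cfc (fun t => 1 - t)).PosSemidef := by rw [honeC]; exact hCle
    have := hcfc_psd_eigen hCh hpsd i
    linarith
  have hNatu : ∀ r : ℝ, natu A B r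
      = mrpow A (1 / 2) * hCh.cfc (fun t => t ^ r) * mrpow A (1 / 2) := by
    intro r
    have h1 : mrpow (mrpow A (-(1 / 2)) * B * mrpow A (-(1 / 2))) r = hCh.cfc (fun t => t ^ r) :=
      hCh.cfc_eq _
    rw [natu, h1]
  have hT : TsallisEntropy A B p
      = mrpow A (1 / 2) * hCh.cfc (fun t => 1 / p * (t ^ p - 1)) * mrpow A (1 / 2) := by
    calc TsallisEntropy A B p = (1 / p : ℝ) • (natu A B p - A) := rfl
      _ = (1 / p : ℝ) • (mrpow A (1 / 2) * hCh.cfc (fun t => t ^ p) * mrpow A (1 / 2)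
            - mrpow A (1 / 2) * hCh.cfc (fun _ => (1:ℝ)) * mrpow A (1 / 2)) := by
          rw [hNatu p, hAform]
      _ = (1 / p : ℝ) • (mrpow A (1 / 2) * (hCh.cfc (fun t => t ^ p) - hCh.cfc (fun _ => (1:ℝ)))
            * mrpow A (1 / 2)) := by simp only [mul_sub, sub_mul]
      _ = mrpow A (1 / 2) * ((1 / p : ℝ) • (hCh.cfc (fun t => t ^ p) - hCh.cfc (fun _ => (1:ℝ))))
            * mrpow A (1 / 2) := by rw [mul_smul_comm, smul_mul_assoc]
      _ = _ := by rw [hcfc_sub hCh, hcfc_smul hCh]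
  have hE1 : natu A B p - natu A B (p - 1)
      = mrpow A (1 / 2) * hCh.cfc (fun t => t ^ p - t ^ (p - 1)) * mrpow A (1 / 2) := by
    calc natu A B p - natu A B (p - 1)
        = mrpow A (1 / 2) * hCh.cfc (fun t => t ^ p) * mrpow A (1 / 2)
          - mrpow A (1 / 2) * hCh.cfc (fun t => t ^ (p - 1)) * mrpow A (1 / 2) := by
          rw [hNatu p, hNatu (p - 1)]
      _ = mrpow A (1 / 2) * (hCh.cfc (fun t => t ^ p) - hCh.cfc (fun t => t ^ (p - 1)))
          * mrpow A (1 / 2) := by simp only [mul_sub, sub_mul]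
      _ = _ := by rw [hcfc_sub hCh]
  have hE5 : natu A B (p + 1) - natu A B p
      = mrpow A (1 / 2) * hCh.cfc (fun t => t ^ (p + 1) - t ^ p) * mrpow A (1 / 2) := by
    calc natu A B (p + 1) - natu A B p
        = mrpow A (1 / 2) * hCh.cfc (fun t => t ^ (p + 1)) * mrpow A (1 / 2)
          - mrpow A (1 / 2) * hCh.cfc (fun t => t ^ p) * mrpow A (1 / 2) := by
          rw [hNatu (p + 1), hNatu p]
      _ = mrpow A (1 / 2) * (hCh.cfc (fun t => t ^ (p + 1)) - hCh.cfc (fun t => t ^ p))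
          * mrpow A (1 / 2) := by simp only [mul_sub, sub_mul]
      _ = _ := by rw [hcfc_sub hCh]
  have hE2 : (1 / 2 : ℝ) • (natu A B p - natu A B (p - 1) + B - A)
      = mrpow A (1 / 2) * hCh.cfc (fun t => 1 / 2 * (t ^ p - t ^ (p - 1) + t - 1))
        * mrpow A (1 / 2) := by
    calc (1 / 2 : ℝ) • (natu A B p - natu A B (p - 1) + B - A)
        = (1 / 2 : ℝ) • (mrpow A (1 / 2) * hCh.cfc (fun t => t ^ p) * mrpow A (1 / 2)
            - mrpow A (1 / 2) * hCh.cfc (fun t => t ^ (p - 1)) * mrpow A (1 / 2)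
            + mrpow A (1 / 2) * hCh.cfc (fun t => t) * mrpow A (1 / 2)
            - mrpow A (1 / 2) * hCh.cfc (fun _ => (1:ℝ)) * mrpow A (1 / 2)) := by
          rw [hNatu p, hNatu (p - 1), hBform, hAform]
      _ = (1 / 2 : ℝ) • (mrpow A (1 / 2) * (hCh.cfc (fun t => t ^ p)
            - hCh.cfc (fun t => t ^ (p - 1)) + hCh.cfc (fun t => t) - hCh.cfc (fun _ => (1:ℝ)))
            * mrpow A (1 / 2)) := by simp only [mul_sub, sub_mul, mul_add, add_mul]
      _ = mrpow A (1 / 2) * ((1 / 2 : ℝ) • (hCh.cfc (fun t => t ^ p)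
            - hCh.cfc (fun t => t ^ (p - 1)) + hCh.cfc (fun t => t) - hCh.cfc (fun _ => (1:ℝ))))
            * mrpow A (1 / 2) := by rw [mul_smul_comm, smul_mul_assoc]
      _ = _ := by
          rw [hcfc_sub hCh, hcfc_add hCh, hcfc_sub hCh, hcfc_smul hCh]
  have hMeq : (1 / 2 : ℝ) • (mrpow A (-(1 / 2)) * B * mrpow A (-(1 / 2)) + 1)
      = hCh.cfc (fun t => 1 / 2 * (t + 1)) := by
    calc (1 / 2 : ℝ) • (mrpow A (-(1 / 2)) * B * mrpow A (-(1 / 2)) + 1)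
        = (1 / 2 : ℝ) • (hCh.cfc (fun t => t) + hCh.cfc (fun _ => (1:ℝ))) := by
          rw [hcfc_id hCh, hcfc_one hCh]
      _ = (1 / 2 : ℝ) • hCh.cfc (fun t => t + 1) := by rw [hcfc_add hCh]
      _ = _ := hcfc_smul hCh _ _
  have hMpow : mrpow ((1 / 2 : ℝ) • (mrpow A (-(1 / 2)) * B * mrpow A (-(1 / 2)) + 1)) (p - 1)
      = hCh.cfc (fun t => (1 / 2 * (t + 1)) ^ (p - 1)) := by
    have hf : ContinuousOn (fun t : ℝ => 1 / 2 * (t + 1))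
        (spectrum ℝ (mrpow A (-(1 / 2)) * B * mrpow A (-(1 / 2)))) := by fun_prop
    have hg : ContinuousOn (fun t : ℝ => t ^ (p - 1))
        ((fun t : ℝ => 1 / 2 * (t + 1)) ''
          spectrum ℝ (mrpow A (-(1 / 2)) * B * mrpow A (-(1 / 2)))) := by
      intro y hy
      obtain ⟨x, hx, rfl⟩ := hy
      rw [Matrix.IsHermitian.spectrum_real_eq_range_eigenvalues hCh] at hx
      obtain ⟨i, rfl⟩ := hx
      have := he0 i
      exact (Real.continuousAt_rpow_const _ _ (Or.inl (by positivity))).continuousWithinAt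
    have hcomp := cfc_comp (R := ℝ) (fun t : ℝ => t ^ (p - 1)) (fun t : ℝ => 1 / 2 * (t + 1))
        (mrpow A (-(1 / 2)) * B * mrpow A (-(1 / 2))) hCh hg hf
    calc mrpow ((1 / 2 : ℝ) • (mrpow A (-(1 / 2)) * B * mrpow A (-(1 / 2)) + 1)) (p - 1)
        = cfc (fun t : ℝ => t ^ (p - 1))
            ((1 / 2 : ℝ) • (mrpow A (-(1 / 2)) * B * mrpow A (-(1 / 2)) + 1)) := rfl
      _ = cfc (fun t : ℝ => t ^ (p - 1))
            (cfc (fun t : ℝ => 1 / 2 * (t + 1)) (mrpow A (-(1 / 2)) * B * mrpow A (-(1 / 2)))) := by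
          rw [hMeq, hCh.cfc_eq]
      _ = cfc ((fun t : ℝ => t ^ (p - 1)) ∘ (fun t : ℝ => 1 / 2 * (t + 1)))
            (mrpow A (-(1 / 2)) * B * mrpow A (-(1 / 2))) := hcomp.symm
      _ = _ := by rw [hCh.cfc_eq]; rfl
  have hKp : Kp A B p = mrpow A (1 / 2)
      * hCh.cfc (fun t => (1 / 2 * (t + 1)) ^ (p - 1) * (t - 1)) * mrpow A (1 / 2) := by
    have hsub : mrpow A (-(1 / 2)) * B * mrpow A (-(1 / 2)) - 1 = hCh.cfc (fun t => t - 1) := by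
      calc mrpow A (-(1 / 2)) * B * mrpow A (-(1 / 2)) - 1
          = hCh.cfc (fun t => t) - hCh.cfc (fun _ => (1:ℝ)) := by rw [hcfc_id hCh, hcfc_one hCh]
        _ = _ := hcfc_sub hCh _ _
    calc Kp A B p
        = mrpow A (1 / 2)
          * mrpow ((1 / 2 : ℝ) • (mrpow A (-(1 / 2)) * B * mrpow A (-(1 / 2)) + 1)) (p - 1)
          * (mrpow A (-(1 / 2)) * B * mrpow A (-(1 / 2)) - 1) * mrpow A (1 / 2) := rfl
      _ = mrpow A (1 / 2) * hCh.cfc (fun t => (1 / 2 * (t + 1)) ^ (p - 1))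
          * hCh.cfc (fun t => t - 1) * mrpow A (1 / 2) := by rw [hMpow, hsub]
      _ = mrpow A (1 / 2) * (hCh.cfc (fun t => (1 / 2 * (t + 1)) ^ (p - 1))
          * hCh.cfc (fun t => t - 1)) * mrpow A (1 / 2) := by simp only [mul_assoc]
      _ = _ := by rw [hcfc_mul hCh]
  have hZero : (0 : Matrix n n ℂ)
      = mrpow A (1 / 2) * hCh.cfc (fun _ => (0:ℝ)) * mrpow A (1 / 2) := by
    rw [hcfc_zero hCh, mul_zero, zero_mul]
  have main : ∀ f g : ℝ → ℝ, (∀ i, f (hCh.eigenvalues i) ≤ g (hCh.eigenvalues i)) →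
      loe (mrpow A (1 / 2) * hCh.cfc f * mrpow A (1 / 2))
        (mrpow A (1 / 2) * hCh.cfc g * mrpow A (1 / 2)) := by
    intro f g h
    unfold loe
    have hdiff : mrpow A (1 / 2) * hCh.cfc g * mrpow A (1 / 2)
        - mrpow A (1 / 2) * hCh.cfc f * mrpow A (1 / 2)
        = mrpow A (1 / 2) * (hCh.cfc g - hCh.cfc f) * mrpow A (1 / 2) := by
      simp only [mul_sub, sub_mul]
    rw [hdiff, hcfc_sub hCh]
    have hpsd := hcfc_psd hCh (f := fun t => g t - f t) fun i => sub_nonneg.mpr (h i)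
    have h2 := hpsd.mul_mul_conjTranspose_same (mrpow A (1 / 2))
    rwa [hSh.eq] at h2
  refine ⟨?_, ?_, ?_, ?_, ?_⟩
  · rw [hE2, hE1]
    exact main _ _ fun i => sc1 (he0 i) (he1 i) hp0 hp1
  · rw [hE2, hT]
    exact main _ _ fun i => sc2 (he0 i) (he1 i) hp0 hp1
  · rw [hT, hKp]
    exact main _ _ fun i => sc3 (he0 i) (he1 i) hp0 hp1
  · rw [hKp, hE5]
    exact main _ _ fun i => sc4 (he0 i) (he1 i) hp0 hp1
  · rw [hE5, hZero]
    exact main _ _ fun i => sc5 (he0 i) (he1 i) hp0 hp1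
end
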